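/- Let P ∈ 𝔽₂^{n×N} be the single block row with E_n in block u_0 and zero elsewhere, where N is the total number of columns of the measurement-sticker deformed code. Assume H_X Sᵀ = T H_G and J_{X,C} Sᵀ = γ H_G, and suppose there exists J_G ∈ 𝔽₂^{q×n_G} with rs J_G ⊆ ker H_G and J_G S = J_{Z,A} (the glue code is devised for J_{Z,A}). Then: (i) rs H_X = rs(H^{MM}_X Pᵀ); (ii) rs(H_Z P) ⊆ rs H^{MM}_Z; (iii) rs J_{X,C} = rs(J^{MM}_X Pᵀ); (iv) rs(J_{Z,C} P) = rs J^{MM}_Z; (v) rs(J_{Z,A} P) ⊆ rs H^{MM}_Z. In particular, by (v), every measured logical operator becomes a Z stabiliser of the measurement-sticker deformed code. -/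

import Mathlib

open Matrix

/-- The `X`-check matrix of the measurement-sticker deformed code, with `d_R = m + 1`.
Column blocks: `u_0` (`Fin n`), `u_1,…,u_m` (`Fin m × Fin nG`, index `j0` is `u_{j0+1}`),
`v_1,…,v_{m+1}` (`Fin (m+1) × Fin rG`, index `i0` is `v_{i0+1}`). -/
def HMMX (m : ℕ) {n nG rX rG : ℕ} (HX : Matrix (Fin rX) (Fin n) (ZMod 2))
    (HG : Matrix (Fin rG) (Fin nG) (ZMod 2))
    (T : Matrix (Fin rX) (Fin rG) (ZMod 2)) :
    Matrix (Fin rX ⊕ Fin m × Fin rG)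
      (Fin n ⊕ (Fin m × Fin nG ⊕ Fin (m + 1) × Fin rG)) (ZMod 2) :=
  Matrix.of fun r c =>
    match r, c with
    | Sum.inl a, Sum.inl j => HX a j
    | Sum.inl _, Sum.inr (Sum.inl _) => 0
    | Sum.inl a, Sum.inr (Sum.inr (i, b)) => if (i : ℕ) = 0 then T a b else 0
    | Sum.inr _, Sum.inl _ => 0
    | Sum.inr (j0, a), Sum.inr (Sum.inl (j', c')) => if j' = j0 then HG a c' else 0
    | Sum.inr (j0, a), Sum.inr (Sum.inr (i, b)) =>
        if ((i : ℕ) = (j0 : ℕ) ∨ (i : ℕ) = (j0 : ℕ) + 1) ∧ b = a then 1 else 0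

/-- The `Z`-check matrix of the measurement-sticker deformed code, with `d_R = m + 1`.
Row blocks: memory `Z` checks (`Fin rZ`) and sticker `Z` checks `i = 1,…,m+1`
(`Fin (m+1) × Fin nG`, index `i0` is check row `i0+1`). -/
def HMMZ (m : ℕ) {n nG rZ rG : ℕ} (HZ : Matrix (Fin rZ) (Fin n) (ZMod 2))
    (HG : Matrix (Fin rG) (Fin nG) (ZMod 2))
    (S : Matrix (Fin nG) (Fin n) (ZMod 2)) :
    Matrix (Fin rZ ⊕ Fin (m + 1) × Fin nG)
      (Fin n ⊕ (Fin m × Fin nG ⊕ Fin (m + 1) × Fin rG)) (ZMod 2) :=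
  Matrix.of fun r c =>
    match r, c with
    | Sum.inl a, Sum.inl j => HZ a j
    | Sum.inl _, Sum.inr _ => 0
    | Sum.inr (i, cc), Sum.inl j => if (i : ℕ) = 0 then S cc j else 0
    | Sum.inr (i, cc), Sum.inr (Sum.inl (j0, c')) =>
        if ((j0 : ℕ) + 1 = (i : ℕ) ∨ (j0 : ℕ) = (i : ℕ)) ∧ c' = cc then 1 else 0
    | Sum.inr (i, cc), Sum.inr (Sum.inr (i', b)) =>
        if (i' : ℕ) = (i : ℕ) then HG b cc else 0


/-- The `X` logical generator matrix of the measurement-sticker deformed code: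
`J_{X,C}` in block `u_0`, `J_{X,C}Sᵀ` in each block `u_j`, `γ` in block `v_{d_R}`. -/
def JMMX (m : ℕ) {n nG rG p : ℕ} (JXC : Matrix (Fin p) (Fin n) (ZMod 2))
    (S : Matrix (Fin nG) (Fin n) (ZMod 2))
    (γ : Matrix (Fin p) (Fin rG) (ZMod 2)) :
    Matrix (Fin p) (Fin n ⊕ (Fin m × Fin nG ⊕ Fin (m + 1) × Fin rG)) (ZMod 2) :=
  Matrix.of fun a c =>
    match c with
    | Sum.inl j => JXC a j
    | Sum.inr (Sum.inl (_, c')) => (JXC * Sᵀ) a c'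
    | Sum.inr (Sum.inr (i, b)) => if (i : ℕ) = m then γ a b else 0

/-- The `Z` logical generator matrix of the measurement-sticker deformed code:
`J_{Z,C}` in block `u_0`, zero elsewhere. -/
def JMMZ (m nG rG : ℕ) {n p : ℕ} (JZC : Matrix (Fin p) (Fin n) (ZMod 2)) :
    Matrix (Fin p) (Fin n ⊕ (Fin m × Fin nG ⊕ Fin (m + 1) × Fin rG)) (ZMod 2) :=
  Matrix.of fun a c =>
    match c with
    | Sum.inl j => JZC a j
    | Sum.inr _ => 0

/-- The row space (𝔽₂-span of the rows) of a matrix. -/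
def rowSpan {ι κ : Type*} (A : Matrix ι κ (ZMod 2)) :
    Submodule (ZMod 2) (κ → ZMod 2) :=
  Submodule.span (ZMod 2) (Set.range A)

/-- The block-row matrix `P` with `E_n` in block `u_0` and zero elsewhere
(measurement-sticker deformed code). -/
def PMM (m nG rG : ℕ) {n : ℕ} :
    Matrix (Fin n) (Fin n ⊕ (Fin m × Fin nG ⊕ Fin (m + 1) × Fin rG)) (ZMod 2) :=
  Matrix.of fun a c =>
    match c with
    | Sum.inl j => if j = a then 1 else 0
    | Sum.inr _ => 0

lemma mulPT {m n nG rG : ℕ} {ι : Type*}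
    (A : Matrix ι (Fin n ⊕ (Fin m × Fin nG ⊕ Fin (m + 1) × Fin rG)) (ZMod 2)) :
    A * (PMM m nG rG)ᵀ = Matrix.of fun r j => A r (Sum.inl j) := by
  change A * (PMM m nG rG (n := n))ᵀ = Matrix.of fun r j => A r (Sum.inl j)
  ext r j
  simp only [Matrix.mul_apply, Matrix.transpose_apply, PMM, Matrix.of_apply,
    Fintype.sum_sum_type]
  simp [Finset.sum_ite_eq, mul_comm]

lemma mulP {m n nG rG : ℕ} {ι : Type*} (B : Matrix ι (Fin n) (ZMod 2)) :
    B * PMM m nG rG = Matrix.of fun a c =>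
      match c with
      | Sum.inl j => B a j
      | Sum.inr _ => 0 := by
  change B * PMM m nG rG (n := n) = Matrix.of fun a c =>
      match c with
      | Sum.inl j => B a j
      | Sum.inr _ => 0
  ext a c
  cases c with
  | inl j =>
    simp only [Matrix.mul_apply, PMM, Matrix.of_apply]
    simp [Finset.sum_ite_eq]
  | inr c' =>
    simp [Matrix.mul_apply, PMM]

lemma rowSpan_fromRows_zero {ι ι' κ : Type*} (A : Matrix ι κ (ZMod 2)) :
    rowSpan (Matrix.fromRows A (0 : Matrix ι' κ (ZMod 2))) = rowSpan A := by
  unfold rowSpan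
  apply le_antisymm
  · rw [Submodule.span_le]
    rintro x ⟨r, rfl⟩
    cases r with
    | inl a => exact Submodule.subset_span ⟨a, rfl⟩
    | inr b =>
      have : Matrix.fromRows A (0 : Matrix ι' κ (ZMod 2)) (Sum.inr b) = 0 := rfl
      rw [this]; exact Submodule.zero_mem _
  · rw [Submodule.span_le]
    rintro x ⟨a, rfl⟩
    exact Submodule.subset_span ⟨Sum.inl a, rfl⟩

lemma sum_ite_or_eq {N : ℕ} (A B : Fin N) (h : A ≠ B) (x : ZMod 2) :
    ∑ i, (if i = A ∨ i = B then x else 0) = 0 := by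
  have key : ∀ i : Fin N, (if i = A ∨ i = B then x else 0) =
      (if i = A then x else 0) + (if i = B then x else 0) := by
    intro i
    by_cases h1 : i = A <;> by_cases h2 : i = B <;> simp_all
  rw [Finset.sum_congr rfl fun i _ => key i, Finset.sum_add_distrib,
    Finset.sum_ite_eq', Finset.sum_ite_eq']
  simp [CharTwo.add_self_eq_zero]

/-- relations between memory operators and measurement-sticker
deformed-code operators. In particular, by (v), every measured logical operator
becomes a `Z` stabiliser of the deformed code. -/
theorem measurement_sticker_operator_relations (m : ℕ) (hm : 1 ≤ m)
    {n nG rX rZ rG p q : ℕ}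
    (HX : Matrix (Fin rX) (Fin n) (ZMod 2))
    (HZ : Matrix (Fin rZ) (Fin n) (ZMod 2))
    (HG : Matrix (Fin rG) (Fin nG) (ZMod 2))
    (S : Matrix (Fin nG) (Fin n) (ZMod 2))
    (T : Matrix (Fin rX) (Fin rG) (ZMod 2))
    (JXC JZC : Matrix (Fin p) (Fin n) (ZMod 2))
    (γ : Matrix (Fin p) (Fin rG) (ZMod 2))
    (JZA : Matrix (Fin q) (Fin n) (ZMod 2))
    (JG : Matrix (Fin q) (Fin nG) (ZMod 2))
    (hcompat : HX * Sᵀ = T * HG)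
    (hγ : JXC * Sᵀ = γ * HG)
    (hJGker : ∀ i : Fin q, HG.mulVec (JG i) = 0)
    (hJGS : JG * S = JZA) :
    rowSpan HX = rowSpan (HMMX m HX HG T * (PMM m nG rG)ᵀ) ∧
      rowSpan (HZ * PMM m nG rG) ≤ rowSpan (HMMZ m HZ HG S) ∧
      rowSpan JXC = rowSpan (JMMX m JXC S γ * (PMM m nG rG)ᵀ) ∧
      rowSpan (JZC * PMM m nG rG) = rowSpan (JMMZ m nG rG JZC) ∧
      rowSpan (JZA * PMM m nG rG) ≤ rowSpan (HMMZ m HZ HG S) := by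
  refine ⟨?_, ?_, ?_, ?_, ?_⟩
  · -- (i)
    have h1 : HMMX m HX HG T * (PMM m nG rG)ᵀ =
        Matrix.fromRows HX (0 : Matrix (Fin m × Fin rG) (Fin n) (ZMod 2)) := by
      rw [mulPT]; ext r j
      cases r with
      | inl a => rfl
      | inr b => rfl
    rw [h1, rowSpan_fromRows_zero]
  · -- (ii)
    unfold rowSpan
    rw [Submodule.span_le]
    rintro x ⟨a, rfl⟩
    refine Submodule.subset_span ⟨Sum.inl a, ?_⟩
    funext c
    cases c with
    | inl j => simp [mulP, HMMZ]
    | inr c' => rcases c' with c' | c' <;> simp [mulP, HMMZ]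
  · -- (iii)
    have h3 : JMMX m JXC S γ * (PMM m nG rG)ᵀ = JXC := by
      rw [mulPT]; ext a j; rfl
    rw [h3]
  · -- (iv)
    have h4 : JZC * PMM m nG rG = JMMZ m nG rG JZC := by
      rw [mulP]; ext a c; cases c <;> rfl
    rw [h4]
  · -- (v)
    unfold rowSpan
    rw [Submodule.span_le]
    rintro x ⟨a, rfl⟩
    have key : (JZA * PMM m nG rG (n := n)) a =
        ∑ pr : Fin (m + 1) × Fin nG, JG a pr.2 • HMMZ m HZ HG S (Sum.inr pr) := by
      funext c
      erw [mulP]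
      simp only [Finset.sum_apply, Pi.smul_apply, smul_eq_mul]
      cases c with
      | inl j =>
        have : ∀ pr : Fin (m + 1) × Fin nG,
            JG a pr.2 * HMMZ m HZ HG S (Sum.inr pr) (Sum.inl j) =
            if pr.1 = (0 : Fin (m + 1)) then JG a pr.2 * S pr.2 j else 0 := by
          rintro ⟨i0, cc⟩
          simp only [HMMZ, Matrix.of_apply]
          by_cases h0 : (i0 : ℕ) = 0
          · rw [if_pos h0, if_pos (Fin.ext h0)]
          · rw [if_neg h0, if_neg (fun hh => h0 (by rw [hh]; rfl)), mul_zero]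
        rw [Finset.sum_congr rfl fun pr _ => this pr, Fintype.sum_prod_type]
        have pull : ∀ x : Fin (m + 1),
            (∑ y : Fin nG, if x = (0 : Fin (m + 1)) then JG a y * S y j else 0) =
            if x = (0 : Fin (m + 1)) then ∑ y : Fin nG, JG a y * S y j else 0 := by
          intro x; split <;> simp
        rw [Finset.sum_congr rfl fun x _ => pull x,
          Finset.sum_ite_eq' Finset.univ (0 : Fin (m + 1))]
        simp only [Finset.mem_univ, if_true]
        show JZA a j = _
        rw [← hJGS, Matrix.mul_apply]
      | inr c' =>
        rcases c' with ⟨j0, c'⟩ | ⟨i', b⟩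
        · -- u_j blocks: telescoping cancellation
          simp only [Matrix.of_apply]
          rw [Fintype.sum_prod_type, Finset.sum_comm]
          have inner : ∀ cc : Fin nG,
              (∑ i0 : Fin (m + 1), JG a cc *
                HMMZ m HZ HG S (Sum.inr (i0, cc)) (Sum.inr (Sum.inl (j0, c')))) = 0 := by
            intro cc
            have : ∀ i0 : Fin (m + 1),
                JG a cc * HMMZ m HZ HG S (Sum.inr (i0, cc)) (Sum.inr (Sum.inl (j0, c'))) =
                if i0 = j0.succ ∨ i0 = j0.castSucc then
                  (if c' = cc then JG a cc else 0) else 0 := by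
              intro i0
              simp only [HMMZ, Matrix.of_apply]
              have hiff : (((j0 : ℕ) + 1 = (i0 : ℕ) ∨ (j0 : ℕ) = (i0 : ℕ)) ∧ c' = cc) ↔
                  ((i0 = j0.succ ∨ i0 = j0.castSucc) ∧ c' = cc) := by
                constructor
                · rintro ⟨h1 | h1, h2⟩
                  · exact ⟨Or.inl (Fin.ext h1.symm), h2⟩
                  · exact ⟨Or.inr (Fin.ext h1.symm), h2⟩
                · rintro ⟨h1 | h1, h2⟩
                  · exact ⟨Or.inl (by rw [h1]; rfl), h2⟩
                  · exact ⟨Or.inr (by rw [h1]; rfl), h2⟩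
              rw [if_congr hiff rfl rfl]
              by_cases h1 : i0 = j0.succ ∨ i0 = j0.castSucc <;>
                by_cases h2 : c' = cc <;> simp [h1, h2]
            rw [Finset.sum_congr rfl fun i0 _ => this i0]
            apply sum_ite_or_eq
            intro hh
            have : (j0 : ℕ) + 1 = (j0 : ℕ) := by
              have := congrArg Fin.val hh
              simpa using this
            omega
          show (0 : ZMod 2) = _
          exact (Finset.sum_eq_zero fun cc _ => inner cc).symm
        · -- v blocks: kernel condition
          simp only [Matrix.of_apply]
          have : ∀ pr : Fin (m + 1) × Fin nG,
              JG a pr.2 * HMMZ m HZ HG S (Sum.inr pr) (Sum.inr (Sum.inr (i', b))) =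
              if pr.1 = i' then JG a pr.2 * HG b pr.2 else 0 := by
            rintro ⟨i0, cc⟩
            simp only [HMMZ, Matrix.of_apply]
            by_cases h0 : (i' : ℕ) = (i0 : ℕ)
            · rw [if_pos h0, if_pos (Fin.ext h0.symm)]
            · rw [if_neg h0, if_neg (fun hh => h0 (by rw [hh])), mul_zero]
          rw [Finset.sum_congr rfl fun pr _ => this pr, Fintype.sum_prod_type]
          have pull : ∀ x : Fin (m + 1),
              (∑ y : Fin nG, if x = i' then JG a y * HG b y else 0) =
              if x = i' then ∑ y : Fin nG, JG a y * HG b y else 0 := by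
            intro x; split <;> simp
          rw [Finset.sum_congr rfl fun x _ => pull x,
            Finset.sum_ite_eq' Finset.univ i']
          simp only [Finset.mem_univ, if_true]
          have := congrFun (hJGker a) b
          simp only [Matrix.mulVec, dotProduct, Pi.zero_apply] at this
          rw [← this]
          exact Finset.sum_congr rfl fun cc _ => mul_comm _ _
    erw [key]
    exact Submodule.sum_mem _ fun pr _ =>
      Submodule.smul_mem _ _ (Submodule.subset_span ⟨Sum.inr pr, rfl⟩)
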